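/- Averaged-noise Hilbert–Schmidt bound: let q be a symmetric kernel with sup_x ‖q(x,·)‖_{L²} < ∞, √Q the associated integral operator, I^m_l = [l/m,(l+1)/m), J^m_l = (l/m − 1/(4m), l/m + 1/(4m)), and Φ^m(u) = 2m ∑_l ⟨u, 𝟙_{J^m_l}⟩ 𝟙_{I^m_l}. Then for any orthonormal basis (e_k) of L²(ℝ): ∑_k (Φ^m(√Q e_k))²(x) ≤ sup_z ‖q(z,·)‖²_{L²} · 𝟙_{[-L^m, L^m)}(x) pointwise. -/

import Mathlib

open MeasureTheory

/-- averaged-noise Hilbert–Schmidt bound: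
`∑_k (Φ^m(√Q e_k))²(x) ≤ (sup_z ‖q(z,·)‖²) 𝟙_{[-L^m, L^m)}(x)` pointwise, where
`Φ^m(u) = 2m ∑_l ⟨u, 𝟙_{J^m_l}⟩ 𝟙_{I^m_l}` and `(√Q h)(x) = ∫ q(x,y) h(y) dy`. -/
theorem averaged_noise_hilbert_schmidt_bound
    (q : ℝ → ℝ → ℝ) (Csq : ℝ) (m L : ℕ) (hm : 1 ≤ m)
    (hq_symm : ∀ x y, q x y = q y x)
    (hq_L2 : ∀ x, MemLp (q x) 2 (volume : Measure ℝ))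
    (hq_bdd : ∀ x, ∫ y, (q x y) ^ 2 ≤ Csq)
    (e : ℕ → ℝ → ℝ)
    (he_parseval : ∀ f : ℝ → ℝ, MemLp f 2 (volume : Measure ℝ) →
      ∑' k, (∫ y, f y * e k y) ^ 2 = ∫ y, (f y) ^ 2) :
    ∀ x : ℝ,
      (∑' k : ℕ,
        (∑ l ∈ Finset.Icc (-(m * L : ℤ)) ((m * L : ℤ) - 1),
          (2 * (m : ℝ) *
            ∫ y in Set.Ioo ((l : ℝ) / m - 1 / (4 * m)) ((l : ℝ) / m + 1 / (4 * m)),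
              (∫ z, q y z * e k z)) *
          Set.indicator (Set.Ico ((l : ℝ) / m) (((l : ℝ) + 1) / m)) (fun _ => (1:ℝ)) x) ^ 2) ≤
      Set.indicator (Set.Ico (-(L : ℝ)) (L : ℝ)) (fun _ => Csq) x := by
  classical
  have hm0 : (0:ℝ) < m := by exact_mod_cast Nat.lt_of_lt_of_le Nat.zero_lt_one hm
  have hCsq : 0 ≤ Csq :=
    le_trans (integral_nonneg fun y => sq_nonneg (q 0 y)) (hq_bdd 0)
  set g : ℕ → ℝ → ℝ := fun k y => ∫ z, q y z * e k z with hgdef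
  -- pointwise Bessel-type bound
  have hBessel : ∀ (y : ℝ) (F : Finset ℕ), ∑ k ∈ F, (g k y) ^ 2 ≤ Csq := by
    intro y F
    have hpar := he_parseval (q y) (hq_L2 y)
    by_cases hs : Summable fun k => (g k y) ^ 2
    · refine le_trans (hs.sum_le_tsum F (fun k _ => sq_nonneg _)) ?_
      calc (∑' k, (g k y) ^ 2) = ∫ z, (q y z) ^ 2 := hpar
        _ ≤ Csq := hq_bdd y
    · have h0 : ∫ z, (q y z) ^ 2 = 0 := by
        rw [← hpar, tsum_eq_zero_of_not_summable hs]
      have hae : (fun z => (q y z) ^ 2) =ᵐ[volume] 0 :=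
        (integral_eq_zero_iff_of_nonneg (fun z => sq_nonneg _)
          ((hq_L2 y).integrable_sq)).mp h0
      have hae' : (q y) =ᵐ[volume] 0 := by
        filter_upwards [hae] with z hz
        exact pow_eq_zero_iff two_ne_zero |>.mp hz
      have hz : ∀ k, g k y = 0 := by
        intro k
        have : (fun z => q y z * e k z) =ᵐ[volume] 0 := by
          filter_upwards [hae'] with z hz; simp [hz]
        simpa [hgdef] using integral_eq_zero_of_ae this
      simp [hz, hCsq]
  intro x
  by_cases hx : x ∈ Set.Ico (-(L : ℝ)) (L : ℝ)
  · -- main case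
    rw [Set.indicator_of_mem hx]
    obtain ⟨hx1, hx2⟩ := hx
    set l₀ : ℤ := ⌊(m:ℝ) * x⌋ with hl₀
    have hfl : (l₀ : ℝ) ≤ (m:ℝ) * x := Int.floor_le _
    have hfl2 : (m:ℝ) * x < (l₀ : ℝ) + 1 := Int.lt_floor_add_one _
    have hmem : l₀ ∈ Finset.Icc (-(m * L : ℤ)) ((m * L : ℤ) - 1) := by
      rw [Finset.mem_Icc]
      constructor
      · rw [hl₀, Int.le_floor]
        push_cast
        nlinarith
      · have : l₀ < (m * L : ℤ) := by
          rw [hl₀, Int.floor_lt]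
          push_cast
          nlinarith
        omega
    set J : Set ℝ := Set.Ioo ((l₀ : ℝ) / m - 1 / (4 * m)) ((l₀ : ℝ) / m + 1 / (4 * m)) with hJ
    set a : ℕ → ℝ := fun k => ∫ y in J, g k y with ha
    -- collapse the sum over l
    have hcollapse : ∀ k : ℕ,
        (∑ l ∈ Finset.Icc (-(m * L : ℤ)) ((m * L : ℤ) - 1),
          (2 * (m : ℝ) *
            ∫ y in Set.Ioo ((l : ℝ) / m - 1 / (4 * m)) ((l : ℝ) / m + 1 / (4 * m)),
              (∫ z, q y z * e k z)) *
          Set.indicator (Set.Ico ((l : ℝ) / m) (((l : ℝ) + 1) / m)) (fun _ => (1:ℝ)) x)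
        = 2 * (m : ℝ) * a k := by
      intro k
      rw [Finset.sum_eq_single_of_mem l₀ hmem]
      · have hxmem : x ∈ Set.Ico ((l₀ : ℝ) / m) (((l₀ : ℝ) + 1) / m) := by
          constructor
          · rw [div_le_iff₀ hm0]; linarith [mul_comm (m:ℝ) x]
          · rw [lt_div_iff₀ hm0]; linarith [mul_comm (m:ℝ) x]
        rw [Set.indicator_of_mem hxmem]
        simp [ha, hJ, hgdef]
      · intro l hl hne
        have hxnot : x ∉ Set.Ico ((l : ℝ) / m) (((l : ℝ) + 1) / m) := by
          intro ⟨h1, h2⟩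
          apply hne
          have hle : l ≤ l₀ := by
            rw [hl₀, Int.le_floor]
            rw [div_le_iff₀ hm0] at h1
            linarith [mul_comm x (m:ℝ)]
          have hge : l₀ ≤ l := by
            have : l₀ < l + 1 := by
              rw [hl₀, Int.floor_lt]
              rw [lt_div_iff₀ hm0] at h2
              push_cast
              linarith [mul_comm x (m:ℝ)]
            omega
          omega
        rw [Set.indicator_of_notMem hxnot, mul_zero]
    have hvolJ : volume J = ENNReal.ofReal (1 / (2 * m)) := by
      rw [hJ, Real.volume_Ioo]
      congr 1
      field_simp
      ring
    have hvolJr : (volume J).toReal = 1 / (2 * m) := by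
      rw [hvolJ, ENNReal.toReal_ofReal (by positivity)]
    have hvolJfin : volume J ≠ ⊤ := by rw [hvolJ]; exact ENNReal.ofReal_ne_top
    -- finite sum bound for squared averages
    have hS : ∀ F : Finset ℕ, ∑ k ∈ F, (a k) ^ 2 ≤ Csq * (1 / (2 * m)) ^ 2 := by
      intro F
      set F' : Finset ℕ := F.filter (fun k => IntegrableOn (g k) J volume) with hF'
      have ha0 : ∀ k ∈ F, k ∉ F' → (a k) ^ 2 = 0 := by
        intro k hk hk'
        have : ¬ IntegrableOn (g k) J volume := by
          intro h; exact hk' (Finset.mem_filter.mpr ⟨hk, h⟩)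
        rw [ha]; simp [integral_undef this]
      have hsum_eq : ∑ k ∈ F, (a k) ^ 2 = ∑ k ∈ F', (a k) ^ 2 := by
        rw [hF', Finset.sum_filter_of_ne]
        intro k hk h
        by_contra hni
        exact h (ha0 k hk (by simp [hF', hni]))
      set S := ∑ k ∈ F', (a k) ^ 2 with hSdef
      have hS0 : 0 ≤ S := Finset.sum_nonneg fun k _ => sq_nonneg _
      have hint : ∀ k ∈ F', Integrable (fun y => a k * g k y) (volume.restrict J) := by
        intro k hk
        exact ((Finset.mem_filter.mp hk).2).const_mul _
      have hSint : S = ∫ y in J, ∑ k ∈ F', a k * g k y := by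
        rw [integral_finset_sum F' hint]
        refine Finset.sum_congr rfl fun k _ => ?_
        rw [integral_const_mul]
        rw [sq]
      have hpt : ∀ y : ℝ, ∑ k ∈ F', a k * g k y ≤ Real.sqrt (S * Csq) := by
        intro y
        have h2 : (∑ k ∈ F', a k * g k y) ^ 2 ≤ S * Csq := by
          refine le_trans (Finset.sum_mul_sq_le_sq_mul_sq F' a (fun k => g k y)) ?_
          exact mul_le_mul_of_nonneg_left (hBessel y F') hS0
        calc ∑ k ∈ F', a k * g k y ≤ |∑ k ∈ F', a k * g k y| := le_abs_self _
          _ = Real.sqrt ((∑ k ∈ F', a k * g k y) ^ 2) := (Real.sqrt_sq_eq_abs _).symm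
          _ ≤ Real.sqrt (S * Csq) := Real.sqrt_le_sqrt h2
      have hup : S ≤ Real.sqrt (S * Csq) * (1 / (2 * m)) := by
        calc S = (∫ y in J, ∑ k ∈ F', a k * g k y) := hSint
          _ ≤ ∫ _ in J, Real.sqrt (S * Csq) :=
              integral_mono (integrable_finset_sum F' hint)
                (integrableOn_const hvolJfin) (fun y => hpt y)
          _ = Real.sqrt (S * Csq) * (1 / (2 * m)) := by
              rw [setIntegral_const, measureReal_def, hvolJr, smul_eq_mul, mul_comm]
      have hkey : S * S ≤ (Csq * (1 / (2 * m)) ^ 2) * S := by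
        have h1 : S * S ≤ (Real.sqrt (S * Csq) * (1 / (2 * m))) ^ 2 := by
          rw [sq]
          exact mul_le_mul hup hup hS0 (le_trans hS0 hup)
        have h2 : (Real.sqrt (S * Csq) * (1 / (2 * m))) ^ 2
            = (Csq * (1 / (2 * m)) ^ 2) * S := by
          rw [mul_pow, Real.sq_sqrt (mul_nonneg hS0 hCsq)]
          ring
        linarith
      rw [hsum_eq]
      rcases eq_or_lt_of_le hS0 with h | h
      · rw [← h]; positivity
      · exact le_of_mul_le_mul_right (by linarith) h
    -- assemble
    have hfun : (fun k : ℕ =>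
        (∑ l ∈ Finset.Icc (-(m * L : ℤ)) ((m * L : ℤ) - 1),
          (2 * (m : ℝ) *
            ∫ y in Set.Ioo ((l : ℝ) / m - 1 / (4 * m)) ((l : ℝ) / m + 1 / (4 * m)),
              (∫ z, q y z * e k z)) *
          Set.indicator (Set.Ico ((l : ℝ) / m) (((l : ℝ) + 1) / m)) (fun _ => (1:ℝ)) x) ^ 2)
        = fun k : ℕ => (2 * (m : ℝ) * a k) ^ 2 := by
      funext k; rw [hcollapse k]
    rw [hfun]
    refine tsum_le_of_sum_le' hCsq fun F => ?_
    have : ∑ k ∈ F, (2 * (m : ℝ) * a k) ^ 2 = (2 * (m:ℝ)) ^ 2 * ∑ k ∈ F, (a k) ^ 2 := by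
      rw [Finset.mul_sum]
      exact Finset.sum_congr rfl fun k _ => by ring
    rw [this]
    calc (2 * (m:ℝ)) ^ 2 * ∑ k ∈ F, (a k) ^ 2
        ≤ (2 * (m:ℝ)) ^ 2 * (Csq * (1 / (2 * m)) ^ 2) :=
          mul_le_mul_of_nonneg_left (hS F) (by positivity)
      _ = Csq := by field_simp
  · -- x outside [-L, L)
    rw [Set.indicator_of_notMem hx]
    have hzero : ∀ k : ℕ,
        (∑ l ∈ Finset.Icc (-(m * L : ℤ)) ((m * L : ℤ) - 1),
          (2 * (m : ℝ) *
            ∫ y in Set.Ioo ((l : ℝ) / m - 1 / (4 * m)) ((l : ℝ) / m + 1 / (4 * m)),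
              (∫ z, q y z * e k z)) *
          Set.indicator (Set.Ico ((l : ℝ) / m) (((l : ℝ) + 1) / m)) (fun _ => (1:ℝ)) x) ^ 2 = 0 := by
      intro k
      have : ∀ l ∈ Finset.Icc (-(m * L : ℤ)) ((m * L : ℤ) - 1),
          (2 * (m : ℝ) *
            ∫ y in Set.Ioo ((l : ℝ) / m - 1 / (4 * m)) ((l : ℝ) / m + 1 / (4 * m)),
              (∫ z, q y z * e k z)) *
          Set.indicator (Set.Ico ((l : ℝ) / m) (((l : ℝ) + 1) / m)) (fun _ => (1:ℝ)) x = 0 := by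
        intro l hl
        rw [Finset.mem_Icc] at hl
        have hxnot : x ∉ Set.Ico ((l : ℝ) / m) (((l : ℝ) + 1) / m) := by
          intro ⟨h1, h2⟩
          apply hx
          constructor
          · refine le_trans ?_ h1
            rw [le_div_iff₀ hm0]
            have : (-(m * L : ℤ) : ℝ) ≤ (l : ℝ) := by exact_mod_cast hl.1
            push_cast at this ⊢
            nlinarith
          · refine lt_of_lt_of_le h2 ?_
            rw [div_le_iff₀ hm0]
            have : (l : ℝ) ≤ (m : ℝ) * (L : ℝ) - 1 := by exact_mod_cast hl.2
            push_cast at this ⊢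
            nlinarith
        rw [Set.indicator_of_notMem hxnot, mul_zero]
      rw [Finset.sum_eq_zero this]
      simp
    rw [tsum_congr hzero]
    simp
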